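/- Formally substituting the Laurent expansion y(z) = (z-a)^{-2} + (a/10)(z-a)² + (1/6)(z-a)³ + b(z-a)⁴ + ⋯ into the perturbed oscillator potential Q(λ;y,y',z) = 4λ³ - 2λz + 2zy - 4y³ + y'² + y'/(λ-y) + 3/(4(λ-y)²) and letting z → a yields, for each fixed λ ≠ values of y, the limit Q → 4λ³ - 2aλ - 28b; i.e. the perturbed oscillator degenerates to the cubic oscillator ψ'' = (4λ³ - 2aλ - 28b)ψ. -/

import Mathlib

open Filter Topology

set_option maxHeartbeats 4000000
set_option maxRecDepth 40000

/-- The perturbed cubic oscillator potential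
Q(λ;y,y',z) = 4λ³ - 2λz + 2zy - 4y³ + y'² + y'/(λ-y) + 3/(4(λ-y)²). -/
noncomputable def perturbedPotential (lam y y' z : ℂ) : ℂ :=
  4 * lam ^ 3 - 2 * lam * z + 2 * z * y - 4 * y ^ 3 + y' ^ 2
    + y' / (lam - y) + 3 / (4 * (lam - y) ^ 2)

noncomputable def P1c (a b w H : ℂ) : ℂ := (1) + (1/10)*w^4*a + (1/6)*w^5 + (1)*w^6*b + (1)*w^7*H
noncomputable def P2c (a b w H K : ℂ) : ℂ := (-2) + (1/5)*w^4*a + (1/2)*w^5 + (4)*w^6*b + (5)*w^7*H + (1)*w^8*K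
noncomputable def Tc (l a b w H K : ℂ) : ℂ := (28)*b + (2)*l*a + (-4)*l^3 + (32)*w*H + ((-3)/25)*w^2*a^2 + (-28)*w^2*l*b + (-2)*w^2*l^2*a + (4)*w^2*l^4 + (4)*w^2*K + (1/15)*w^3*a + (-2)*w^3*l^2 + (-32)*w^3*H*l + (7/12)*w^4 + (8/5)*w^4*a*b + (8/25)*w^4*l*a^2 + ((-2)/5)*w^4*l^3*a + (-4)*w^4*K*l + (26/3)*w^5*b + (13/15)*w^5*l*a + ((-2)/3)*w^5*l^3 + (8/5)*w^5*H*a + (24)*w^6*b^2 + ((-1)/125)*w^6*a^3 + (7/12)*w^6*l + (16/5)*w^6*l*a*b + (-4)*w^6*l^3*b + (28/3)*w^6*H + ((-1)/30)*w^7*a^2 + (4)*w^7*l*b + (2/3)*w^7*K + (44)*w^7*H*b + (18/5)*w^7*H*l*a + (-4)*w^7*H*l^3 + ((-17)/360)*w^8*a + ((-3)/25)*w^8*a^2*b + (4)*w^8*l*b^2 + ((-1)/250)*w^8*l*a^3 + (-4)*w^8*K*b + (2/5)*w^8*K*l*a + (5)*w^8*H*l + (19)*w^8*H^2 + ((-5)/216)*w^9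 + ((-1)/3)*w^9*a*b + ((-1)/50)*w^9*l*a^2 + (1)*w^9*K*l + ((-4)/25)*w^9*H*a^2 + (16)*w^9*H*l*b + (-6)*w^9*H*K + ((-1)/4)*w^10*b + ((-2)/5)*w^10*a*b^2 + (1/2500)*w^10*a^4 + ((-1)/30)*w^10*l*a + ((-3)/25)*w^10*l*a^2*b + ((-1)/25)*w^10*K*a^2 + (8)*w^10*K*l*b + (-1)*w^10*K^2 + ((-1)/2)*w^10*H*a + (13)*w^10*H^2*l + ((-2)/3)*w^11*b^2 + (1/375)*w^11*a^3 + ((-1)/54)*w^11*l + ((-2)/5)*w^11*l*a*b + ((-1)/6)*w^11*K*a + ((-5)/12)*w^11*H + (-2)*w^11*H*a*b + ((-3)/25)*w^11*H*l*a^2 + (10)*w^11*H*K*l + (1/150)*w^12*a^2 + (2/125)*w^12*a^3*b + ((-1)/3)*w^12*l*b + ((-6)/5)*w^12*l*a*b^2 + ((-1)/6)*w^12*K + ((-6)/5)*w^12*K*a*b + (1)*w^12*K^2*l + ((-11)/3)*w^12*H*b + ((-2)/5)*w^12*H*l*a + ((-17)/10)*w^12*H^2*a + (1/135)*w^13*a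 + (2/25)*w^13*a^2*b + (-2)*w^13*l*b^2 + ((-7)/3)*w^13*K*b + (-8)*w^13*H*b^2 + (2/125)*w^13*H*a^3 + ((-1)/3)*w^13*H*l + ((-12)/5)*w^13*H*l*a*b + ((-7)/5)*w^13*H*K*a + ((-19)/6)*w^13*H^2 + (1/324)*w^14 + (2/15)*w^14*a*b + (6/25)*w^14*a^2*b^2 + (-4)*w^14*l*b^3 + (-8)*w^14*K*b^2 + ((-1)/10)*w^14*K^2*a + (2/25)*w^14*H*a^2 + (-4)*w^14*H*l*b + ((-8)/3)*w^14*H*K + (-17)*w^14*H^2*b + ((-6)/5)*w^14*H^2*l*a + (2/27)*w^15*b + (4/5)*w^15*a*b^2 + ((-1)/6)*w^15*K^2 + (2/15)*w^15*H*a + (12/25)*w^15*H*a^2*b + (-12)*w^15*H*l*b^2 + (-18)*w^15*H*K*b + (-2)*w^15*H^2*l + (-9)*w^15*H^3 + (2/3)*w^16*b^2 + (8/5)*w^16*a*b^3 + (-1)*w^16*K^2*b + (2/27)*w^16*H + (8/5)*w^16*H*a*b + (6/25)*w^16*H^2*a^2 + (-12)*w^16*H^2*l*b + (-10)*w^16*H^2*K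 + (8/3)*w^17*b^3 + (4/3)*w^17*H*b + (24/5)*w^17*H*a*b^2 + (-1)*w^17*H*K^2 + (4/5)*w^17*H^2*a + (-4)*w^17*H^3*l + (4)*w^18*b^4 + (8)*w^18*H*b^2 + (2/3)*w^18*H^2 + (24/5)*w^18*H^2*a*b + (16)*w^19*H*b^3 + (8)*w^19*H^2*b + (8/5)*w^19*H^3*a + (24)*w^20*H^2*b^2 + (8/3)*w^20*H^3 + (16)*w^21*H^3*b + (4)*w^22*H^4

/-- The core polynomial identity behind the cancellation of singular terms. -/
lemma hpolyAux (l a b w H K : ℂ) :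
    ((4*l^3 - 2*l*(a+w))*w^6 + 2*(a+w)*(P1c a b w H)*w^4 - 4*(P1c a b w H)^3
        + (P2c a b w H K)^2) * (l*w^2 - P1c a b w H) + w^5 * (P2c a b w H K)
      = w^6 * Tc l a b w H K := by
  unfold P1c P2c Tc
  ring

/-- Key algebraic identity: the perturbed potential written via the normalized
Laurent data equals an explicitly regular expression. -/
lemma P1c_continuous (a b : ℂ) : Continuous (fun p : ℂ × ℂ => P1c a b p.1 p.2) := by
  unfold P1c; fun_prop

lemma Tc_continuous (l a b : ℂ) : Continuous (fun p : ℂ × ℂ × ℂ => Tc l a b p.1 p.2.1 p.2.2) := by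
  unfold Tc; fun_prop

lemma P1c_at_zero (a b H : ℂ) : P1c a b 0 H = 1 := by unfold P1c; ring

lemma Tc_at_zero (l a b H K : ℂ) : Tc l a b 0 H K = -(4*l^3 - 2*a*l - 28*b) := by
  unfold Tc; ring

lemma keyAlg (l a b w H K : ℂ) (hw : w ≠ 0) (hD : l*w^2 - P1c a b w H ≠ 0) :
    perturbedPotential l (P1c a b w H / w^2) (P2c a b w H K / w^3) (a+w)
      = Tc l a b w H K / (l*w^2 - P1c a b w H) + 3*w^4/(4*(l*w^2 - P1c a b w H)^2) := by
  set p1 := P1c a b w H with hp1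
  set p2 := P2c a b w H K with hp2
  set t := Tc l a b w H K with ht
  set D := l*w^2 - p1 with hDdef
  have hid := hpolyAux l a b w H K
  rw [← hp1, ← hp2, ← ht, ← hDdef] at hid
  have e1 : l - p1/w^2 = D/w^2 := by rw [hDdef]; field_simp
  clear_value p1 p2 t D
  clear hp1 hp2 ht hDdef
  have h6 : (w:ℂ)^6 ≠ 0 := pow_ne_zero _ hw
  have h6D : w^6*D ≠ 0 := mul_ne_zero h6 hD
  unfold perturbedPotential
  rw [e1]
  have e2 : (p2/w^3)/(D/w^2) = w^5*p2/(w^6*D) := by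
    rw [div_div_div_comm, show w^3/w^2 = w from by rw [div_eq_iff (pow_ne_zero 2 hw)]; ring]
    rw [div_div, div_eq_div_iff (mul_ne_zero hD hw) h6D]
    ring
  have e3 : 3/(4*(D/w^2)^2) = 3*w^4/(4*D^2) := by
    have hx : (4:ℂ)*(D/w^2)^2 ≠ 0 := by
      apply mul_ne_zero (by norm_num)
      exact pow_ne_zero 2 (div_ne_zero hD (pow_ne_zero 2 hw))
    rw [div_eq_div_iff hx (by exact mul_ne_zero (by norm_num) (pow_ne_zero 2 hD))]
    field_simp
  have e4 : 4*l^3 - 2*l*(a+w) + 2*(a+w)*(p1/w^2) - 4*(p1/w^2)^3 + (p2/w^3)^2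
      = ((4*l^3 - 2*l*(a+w))*w^6 + 2*(a+w)*p1*w^4 - 4*p1^3 + p2^2)/w^6 := by
    field_simp
  rw [e2, e3, e4]
  rw [add_left_inj]
  rw [div_add_div _ _ h6 h6D, div_eq_div_iff (mul_ne_zero h6 h6D) hD]
  calc (((4*l^3 - 2*l*(a+w))*w^6 + 2*(a+w)*p1*w^4 - 4*p1^3 + p2^2)*(w^6*D) + w^6*(w^5*p2)) * D
      = ((((4*l^3 - 2*l*(a+w))*w^6 + 2*(a+w)*p1*w^4 - 4*p1^3 + p2^2)*D + w^5*p2) * (w^6*D)) := by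
        ring
    _ = (w^6*t) * (w^6*D) := by rw [hid]
    _ = t*(w^6*(w^6*D)) := by ring

/-- substituting the Laurent expansion
y(z) = (z-a)⁻² + (a/10)(z-a)² + (1/6)(z-a)³ + b(z-a)⁴ + ⋯ of a Painlevé I solution into
the perturbed oscillator potential Q(λ;y,y',z) and letting z → a yields, for each
fixed λ, the limit 4λ³ - 2aλ - 28b: the perturbed oscillator degenerates to the cubic
oscillator ψ'' = (4λ³ - 2aλ - 28b)ψ. -/
theorem perturbedPotential_tendsto_cubic (a b : ℂ) (r : ℝ) (hr : 0 < r) (y h : ℂ → ℂ)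
    (hy : DifferentiableOn ℂ y (Metric.ball a r \ {a}))
    (hh : AnalyticAt ℂ h a)
    (hlaurent : ∀ᶠ z in 𝓝[≠] a,
      y z = (z - a) ^ (-2 : ℤ) + (a / 10) * (z - a) ^ 2 + (1 / 6) * (z - a) ^ 3
          + b * (z - a) ^ 4 + (z - a) ^ 5 * h z)
    (lam : ℂ) :
    Tendsto (fun z => perturbedPotential lam (y z) (deriv y z) z) (𝓝[≠] a)
      (𝓝 (4 * lam ^ 3 - 2 * a * lam - 28 * b)) := by
  -- continuity of h and deriv h at a
  have hch : ContinuousAt h a := hh.continuousAt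
  have hch' : ContinuousAt (deriv h) a := by
    have hfd : AnalyticAt ℂ ((ContinuousLinearMap.apply ℂ ℂ (1:ℂ)) ∘ (fderiv ℂ h)) a :=
      ((ContinuousLinearMap.apply ℂ ℂ (1:ℂ)).analyticAt _).comp hh.fderiv
    exact hfd.continuousAt
  -- basic limit of z - a
  have hwten : Tendsto (fun z : ℂ => z - a) (𝓝 a) (𝓝 0) := by
    have : ContinuousAt (fun z : ℂ => z - a) a := continuousAt_id.sub continuousAt_const
    have h2 : Tendsto (fun z : ℂ => z - a) (𝓝 a) (𝓝 (a - a)) := this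
    simpa using h2
  -- limit of the normalized denominator
  have hP1ten : Tendsto (fun z => P1c a b (z-a) (h z)) (𝓝 a) (𝓝 1) := by
    have := ((P1c_continuous a b).tendsto (0, h a)).comp (hwten.prodMk_nhds hch)
    simpa [Function.comp_def, P1c_at_zero] using this
  have hDten : Tendsto (fun z => lam*(z-a)^2 - P1c a b (z-a) (h z)) (𝓝 a) (𝓝 (-1)) := by
    have hc : Tendsto (fun z : ℂ => lam * (z - a)^2) (𝓝 a) (𝓝 (lam * 0^2)) :=
      tendsto_const_nhds.mul (hwten.pow 2)
    have := hc.sub hP1ten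
    simpa using this
  have hDne : ∀ᶠ z in 𝓝[≠] a, lam*(z-a)^2 - P1c a b (z-a) (h z) ≠ 0 :=
    (hDten.eventually_ne (by norm_num)).filter_mono nhdsWithin_le_nhds
  -- an open set where the Laurent expansion holds and h is analytic
  rw [eventually_nhdsWithin_iff] at hlaurent
  obtain ⟨u, hu, huo, hau⟩ := eventually_nhds_iff.mp (hlaurent.and hh.eventually_analyticAt)
  have hmem : ∀ᶠ z in 𝓝[≠] a, z ∈ u ∧ z ≠ a := by
    filter_upwards [mem_nhdsWithin_of_mem_nhds (huo.mem_nhds hau), eventually_mem_nhdsWithin] with z h1 h2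
    exact ⟨h1, h2⟩
  -- normalized form of y
  have hyq : ∀ᶠ z in 𝓝[≠] a, y z = P1c a b (z-a) (h z) / (z-a)^2 := by
    filter_upwards [hmem] with z hz
    obtain ⟨hzu, hza⟩ := hz
    have hwne : (z - a) ≠ 0 := sub_ne_zero.mpr hza
    have hzy := (hu z hzu).1 hza
    rw [hzy, show ((z-a):ℂ)^(-2:ℤ) = ((z-a)^2)⁻¹ by
      rw [zpow_neg]; norm_cast]
    unfold P1c
    field_simp
  -- normalized form of deriv y
  have hy'q : ∀ᶠ z in 𝓝[≠] a, deriv y z = P2c a b (z-a) (h z) (deriv h z) / (z-a)^3 := by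
    filter_upwards [hmem] with z hz
    obtain ⟨hzu, hza⟩ := hz
    have hwne : (z - a) ≠ 0 := sub_ne_zero.mpr hza
    have hderivh : DifferentiableAt ℂ h z := (hu z hzu).2.differentiableAt
    have hopen : IsOpen (u ∩ {x : ℂ | x ≠ a}) := huo.inter isOpen_ne
    have hznb : u ∩ {x : ℂ | x ≠ a} ∈ 𝓝 z := hopen.mem_nhds ⟨hzu, hza⟩
    have heq : y =ᶠ[𝓝 z] (fun x => (x - a) ^ (-2 : ℤ) + (a / 10) * (x - a) ^ 2
        + (1 / 6) * (x - a) ^ 3 + b * (x - a) ^ 4 + (x - a) ^ 5 * h x) :=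
      eventually_of_mem hznb (fun x hx => (hu x hx.1).1 hx.2)
    rw [heq.deriv_eq]
    have hin : HasDerivAt (fun x : ℂ => x - a) 1 z := (hasDerivAt_id z).sub_const a
    have h1 : HasDerivAt (fun x : ℂ => (x - a) ^ (-2:ℤ))
        (((-2:ℤ) * (z - a) ^ (-2 - 1 : ℤ)) * 1) z :=
      by have := (hasDerivAt_zpow (-2) (z - a) (Or.inl hwne)).comp z hin; exact this
    have h2 : HasDerivAt (fun x : ℂ => (a/10) * (x - a) ^ 2)
        ((a/10) * (2 * (z - a) ^ 1 * 1)) z := (hin.pow 2).const_mul (a/10)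
    have h3 : HasDerivAt (fun x : ℂ => (1/6 : ℂ) * (x - a) ^ 3)
        ((1/6 : ℂ) * (3 * (z - a) ^ 2 * 1)) z := (hin.pow 3).const_mul (1/6 : ℂ)
    have h4 : HasDerivAt (fun x : ℂ => b * (x - a) ^ 4)
        (b * (4 * (z - a) ^ 3 * 1)) z := (hin.pow 4).const_mul b
    have h5 : HasDerivAt (fun x : ℂ => (x - a) ^ 5 * h x)
        ((5 * (z - a) ^ 4 * 1) * h z + (z - a) ^ 5 * deriv h z) z :=
      (hin.pow 5).mul hderivh.hasDerivAt
    have htot := (((h1.add h2).add h3).add h4).add h5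
    rw [show deriv (fun x => (x - a) ^ (-2:ℤ) + a / 10 * (x - a) ^ 2 + 1 / 6 * (x - a) ^ 3 + b * (x - a) ^ 4 + (x - a) ^ 5 * h x) z = _ from htot.deriv]
    rw [show ((z-a):ℂ)^(-2 - 1:ℤ) = ((z-a)^3)⁻¹ by
      rw [show (-2 - 1 : ℤ) = -3 by norm_num, zpow_neg]; norm_cast]
    unfold P2c
    push_cast
    field_simp
    ring
  -- rewrite the potential as the regular model expression
  have hQeq : ∀ᶠ z in 𝓝[≠] a, perturbedPotential lam (y z) (deriv y z) z
      = Tc lam a b (z-a) (h z) (deriv h z) / (lam*(z-a)^2 - P1c a b (z-a) (h z))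
        + 3*(z-a)^4/(4*(lam*(z-a)^2 - P1c a b (z-a) (h z))^2) := by
    filter_upwards [hyq, hy'q, hDne, eventually_mem_nhdsWithin] with z e1 e2 e3 hza
    have hza' : z ≠ a := hza
    have hwne : (z - a) ≠ 0 := sub_ne_zero.mpr hza'
    rw [e1, e2]
    have hkey := keyAlg lam a b (z-a) (h z) (deriv h z) hwne e3
    rw [show a + (z - a) = z by ring] at hkey
    exact hkey
  rw [tendsto_congr' hQeq]
  -- limit of the regular model expression
  have hTten : Tendsto (fun z => Tc lam a b (z-a) (h z) (deriv h z)) (𝓝 a)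
      (𝓝 (Tc lam a b 0 (h a) (deriv h a))) := by
    have := ((Tc_continuous lam a b).tendsto (0, h a, deriv h a)).comp
      (hwten.prodMk_nhds (hch.prodMk_nhds hch'))
    simpa [Function.comp_def] using this
  have hvalT : Tc lam a b 0 (h a) (deriv h a) = -(4 * lam ^ 3 - 2 * a * lam - 28 * b) := by
    rw [Tc_at_zero]
  have hfinal : Tendsto (fun z => Tc lam a b (z-a) (h z) (deriv h z)
        / (lam*(z-a)^2 - P1c a b (z-a) (h z))
      + 3*(z-a)^4/(4*(lam*(z-a)^2 - P1c a b (z-a) (h z))^2)) (𝓝 a)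
      (𝓝 (Tc lam a b 0 (h a) (deriv h a) / (-1) + 3*(0:ℂ)^4/(4*((-1:ℂ))^2))) := by
    have hnum : Tendsto (fun z : ℂ => 3 * (z - a)^4) (𝓝 a) (𝓝 (3 * 0^4)) :=
      tendsto_const_nhds.mul (hwten.pow 4)
    have hden : Tendsto (fun z : ℂ => 4 * (lam*(z-a)^2 - P1c a b (z-a) (h z))^2)
        (𝓝 a) (𝓝 (4 * ((-1):ℂ)^2)) := tendsto_const_nhds.mul (hDten.pow 2)
    have h0 : (3:ℂ) * 0^4 = 3*(0:ℂ)^4 := rfl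
    exact (hTten.div hDten (by norm_num)).add (hnum.div hden (by norm_num))
  have hval : Tc lam a b 0 (h a) (deriv h a) / (-1) + 3*(0:ℂ)^4/(4*((-1:ℂ))^2)
      = 4 * lam ^ 3 - 2 * a * lam - 28 * b := by
    rw [hvalT]; ring
  rw [hval] at hfinal
  exact hfinal.mono_left nhdsWithin_le_nhds
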